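/- arXiv:1003.6021 — 2 statements merged into one kernel-verified Lean document; each statement's English description precedes it below -/
import Mathlib

section
/- Let C_i := (−1)^{i+1}(1/i + 1/(i+1)) for i ≥ 1. Then (a) the series ∑_{i≥1} |C_i| diverges; and (b) for every continuously differentiable function φ : ℝ → ℝ with compact support, the series ∑_{i≥1} C_i φ(1/i) converges. In particular the series of Dirac masses ∑_{i≥1} C_i δ_{1/i} converges in the sense of distributions on ℝ although the sum of the absolute weights diverges. -/
open Filter Topology

/-- The weights `C i = (−1)^(i+1) (1/i + 1/(i+1))`, `i ≥ 1`, of the paper's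
counterexample. -/
noncomputable def counterWeight (i : ℕ) : ℝ :=
  (-1 : ℝ) ^ (i + 1) * (1 / (i : ℝ) + 1 / ((i : ℝ) + 1))

/-- The telescoping sequence `t j = (-1)^(j+1)/j`. -/
noncomputable def tAux (j : ℕ) : ℝ := (-1 : ℝ) ^ (j + 1) / j

lemma counterWeight_eq (i : ℕ) : counterWeight i = tAux i - tAux (i + 1) := by
  simp only [counterWeight, tAux]
  push_cast
  rw [pow_succ]
  ring

lemma icc_sum_eq (h : ℕ → ℝ) (N : ℕ) :
    ∑ i ∈ Finset.Icc 1 N, h i = ∑ i ∈ Finset.range N, h (1 + i) := by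
  rw [← Finset.Ico_add_one_right_eq_Icc, Finset.sum_Ico_eq_sum_range]
  simp

lemma tAux_tendsto : Tendsto (fun N : ℕ => tAux (N + 1)) atTop (𝓝 0) := by
  apply squeeze_zero_norm (fun N => ?_) tendsto_one_div_add_atTop_nhds_zero_nat
  simp only [tAux, norm_div, norm_pow, norm_neg, norm_one, one_pow, one_div]
  rw [Real.norm_natCast]
  push_cast
  exact le_refl _

lemma counterWeight_abs (i : ℕ) :
    |counterWeight i| = 1 / (i : ℝ) + 1 / ((i : ℝ) + 1) := by
  rw [counterWeight, abs_mul, abs_pow, abs_neg, abs_one, one_pow, one_mul,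
    abs_of_nonneg (by positivity)]

/-- **Counterexample of the paper (Remark 2.2).**
(a) The series `∑_{i≥1} |C i|` diverges, while
(b) for every `C¹` compactly supported `φ : ℝ → ℝ` the series `∑_{i≥1} C i * φ(1/i)`
converges; in particular `∑_{i≥1} C i δ_{1/i}` converges as a distribution although the
sum of the absolute weights diverges. -/
theorem dirac_series_distributional_counterexample :
    (Tendsto (fun N => ∑ i ∈ Finset.Icc 1 N, |counterWeight i|) atTop atTop) ∧
    (∀ φ : ℝ → ℝ, ContDiff ℝ 1 φ → HasCompactSupport φ →
      ∃ l : ℝ,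
        Tendsto (fun N => ∑ i ∈ Finset.Icc 1 N, counterWeight i * φ (1 / (i : ℝ)))
          atTop (𝓝 l)) := by
  constructor
  · apply tendsto_atTop_mono _ Real.tendsto_sum_range_one_div_nat_succ_atTop
    intro N
    rw [icc_sum_eq]
    apply Finset.sum_le_sum
    intro i _
    rw [counterWeight_abs]
    push_cast
    rw [add_comm 1 (i:ℝ)]
    have h2 : (0:ℝ) ≤ 1 / ((i:ℝ) + 1 + 1) := by positivity
    linarith
  · intro φ hφ hφc
    obtain ⟨K, hK⟩ := hφ.lipschitzWith_of_hasCompactSupport hφc one_ne_zero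
    have hle : ∀ i : ℕ,
        |counterWeight (1+i) * (φ (1 / ((1+i:ℕ):ℝ)) - φ 0)| ≤ 2 * (K:ℝ) / ((i:ℝ)+1)^2 := by
      intro i
      have h1 : (0:ℝ) < (i:ℝ) + 1 := by positivity
      have hb : |φ (1 / ((1+i:ℕ):ℝ)) - φ 0| ≤ (K:ℝ) * (1 / ((i:ℝ)+1)) := by
        have h := hK.dist_le_mul (1 / ((1+i:ℕ):ℝ)) 0
        rw [Real.dist_eq, Real.dist_eq, sub_zero] at h
        calc |φ (1 / ((1+i:ℕ):ℝ)) - φ 0| ≤ (K:ℝ) * |1 / ((1+i:ℕ):ℝ)| := h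
          _ ≤ (K:ℝ) * (1 / ((i:ℝ)+1)) := by
              apply mul_le_mul_of_nonneg_left _ K.coe_nonneg
              rw [abs_of_nonneg (by positivity)]
              push_cast
              rw [add_comm 1 (i:ℝ)]
      have hc : |counterWeight (1 + i)| ≤ 2 / ((i:ℝ)+1) := by
        rw [counterWeight_abs]
        push_cast
        rw [div_add_div _ _ (by positivity) (by positivity),
          div_le_div_iff₀ (by positivity) (by positivity)]
        nlinarith [sq_nonneg ((i:ℝ)+1)]
      calc |counterWeight (1+i) * (φ (1 / ((1+i:ℕ):ℝ)) - φ 0)|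
          = |counterWeight (1+i)| * |φ (1 / ((1+i:ℕ):ℝ)) - φ 0| := abs_mul _ _
        _ ≤ (2 / ((i:ℝ)+1)) * ((K:ℝ) * (1 / ((i:ℝ)+1))) :=
            mul_le_mul hc hb (abs_nonneg _) (by positivity)
        _ = 2 * (K:ℝ) / ((i:ℝ)+1)^2 := by
            rw [mul_one_div, div_mul_div_comm, sq]
    have hsumb : Summable (fun i : ℕ => 2 * (K:ℝ) / ((i:ℝ)+1)^2) := by
      have h2 : Summable (fun n : ℕ => 1 / ((n:ℝ))^2) :=
        Real.summable_one_div_nat_pow.mpr one_lt_two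
      have h3 : Summable (fun n : ℕ => 1 / (((n+1:ℕ)):ℝ)^2) :=
        (summable_nat_add_iff (f := fun n : ℕ => 1 / ((n:ℝ))^2) 1).mpr h2
      apply (h3.mul_left (2 * (K:ℝ))).congr
      intro n
      push_cast
      ring
    have hsum : Summable (fun i : ℕ => counterWeight (1+i) * (φ (1 / ((1+i:ℕ):ℝ)) - φ 0)) := by
      apply Summable.of_abs
      exact Summable.of_nonneg_of_le (fun i => abs_nonneg _) hle hsumb
    obtain ⟨s, hs⟩ := hsum
    refine ⟨s + φ 0 * 1, ?_⟩
    have key : ∀ N : ℕ, ∑ i ∈ Finset.Icc 1 N, counterWeight i * φ (1 / (i : ℝ))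
        = (∑ i ∈ Finset.range N, counterWeight (1+i) * (φ (1 / ((1+i:ℕ):ℝ)) - φ 0))
          + φ 0 * (tAux 1 - tAux (N + 1)) := by
      intro N
      have htel : ∑ i ∈ Finset.range N, (tAux (i + 1) - tAux (i + 1 + 1))
          = tAux 1 - tAux (N + 1) :=
        Finset.sum_range_sub' (fun i => tAux (i + 1)) N
      rw [icc_sum_eq, ← htel, Finset.mul_sum, ← Finset.sum_add_distrib]
      apply Finset.sum_congr rfl
      intro i _
      have hcw : counterWeight (1 + i) = tAux (i + 1) - tAux (i + 1 + 1) := by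
        rw [add_comm 1 i]; exact counterWeight_eq (i + 1)
      rw [hcw]
      ring
    have h1 : Tendsto (fun N : ℕ => φ 0 * (tAux 1 - tAux (N + 1))) atTop (𝓝 (φ 0 * 1)) := by
      have h0 : Tendsto (fun N : ℕ => tAux 1 - tAux (N + 1)) atTop (𝓝 (tAux 1 - 0)) :=
        tendsto_const_nhds.sub tAux_tendsto
      have ht1 : tAux 1 - 0 = 1 := by norm_num [tAux]
      rw [ht1] at h0
      exact h0.const_mul _
    have := hs.tendsto_sum_nat.add h1
    apply this.congr
    intro N
    rw [key N]
end

section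
/- Fix real numbers B_x, B_y and define on ℝ² ∖ {0}, with r² = x² + y², the symmetric matrix field E_xx = (−B_y x − B_x y)/(2π r²), E_xy = E_yx = (−B_y y + B_x x)/(2π r²), E_yy = (B_y x + B_x y)/(2π r²). Then E_xx, E_xy, E_yy are locally integrable on ℝ², and the distributional planar incompatibility of E is the first-order distribution η = B_y ∂_xδ₀ − B_x ∂_yδ₀; explicitly, for every φ ∈ C_c^∞(ℝ²), ∫_{ℝ²} ( E_xx ∂_y²φ + E_yy ∂_x²φ − 2 E_xy ∂_x∂_yφ ) dx dy = −B_y ∂_xφ(0,0) + B_x ∂_yφ(0,0). -/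
open MeasureTheory Real

/-- Partial derivative in the `α`-th coordinate direction of a function on `ℝ²`. -/
noncomputable def pd (α : Fin 2) (f : EuclideanSpace ℝ (Fin 2) → ℝ) :
    EuclideanSpace ℝ (Fin 2) → ℝ :=
  fun x => fderiv ℝ f x (EuclideanSpace.single α 1)

/-- `E_xx` component of the edge-dislocation strain with Burgers vector `(Bx, By)`. -/
noncomputable def Exx (Bx By : ℝ) (p : EuclideanSpace ℝ (Fin 2)) : ℝ :=
  (-By * p 0 - Bx * p 1) / (2 * π * ((p 0) ^ 2 + (p 1) ^ 2))

/-- `E_xy = E_yx` component of the edge-dislocation strain. -/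
noncomputable def Exy (Bx By : ℝ) (p : EuclideanSpace ℝ (Fin 2)) : ℝ :=
  (-By * p 1 + Bx * p 0) / (2 * π * ((p 0) ^ 2 + (p 1) ^ 2))

/-- `E_yy` component of the edge-dislocation strain. -/
noncomputable def Eyy (Bx By : ℝ) (p : EuclideanSpace ℝ (Fin 2)) : ℝ :=
  (By * p 0 + Bx * p 1) / (2 * π * ((p 0) ^ 2 + (p 1) ^ 2))

namespace EdgeDisloc

open Set Filter Topology

/-! ### The identification of `ℝ × ℝ` with `EuclideanSpace ℝ (Fin 2)` -/

noncomputable def cE : (ℝ × ℝ) ≃L[ℝ] EuclideanSpace ℝ (Fin 2) :=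
  (ContinuousLinearEquiv.finTwoArrow ℝ ℝ).symm.trans
    (EuclideanSpace.equiv (Fin 2) ℝ).symm

lemma cE_mp : MeasurePreserving (⇑cE) volume volume := by
  have h2 := (EuclideanSpace.volume_preserving_symm_measurableEquiv_toLp (Fin 2)).symm
  have := h2.comp (volume_preserving_finTwoArrow ℝ).symm
  exact this

lemma cE_emb : MeasurableEmbedding (⇑cE) :=
  cE.toHomeomorph.measurableEmbedding

lemma integral_cE (f : EuclideanSpace ℝ (Fin 2) → ℝ) :
    ∫ q : ℝ × ℝ, f (cE q) = ∫ p, f p :=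
  cE_mp.integral_comp cE_emb f

lemma integrable_cE (f : EuclideanSpace ℝ (Fin 2) → ℝ) :
    Integrable (fun q : ℝ × ℝ => f (cE q)) ↔ Integrable f :=
  cE_mp.integrable_comp_emb cE_emb

lemma cE_apply_fst (q : ℝ × ℝ) : cE q 0 = q.1 := rfl
lemma cE_apply_snd (q : ℝ × ℝ) : cE q 1 = q.2 := rfl

lemma cE_v0 : cE ((1 : ℝ), (0 : ℝ)) = EuclideanSpace.single (0 : Fin 2) (1 : ℝ) := by
  ext i
  fin_cases i <;> simp [cE, EuclideanSpace.single_apply]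

lemma cE_v1 : cE ((0 : ℝ), (1 : ℝ)) = EuclideanSpace.single (1 : Fin 2) (1 : ℝ) := by
  ext i
  fin_cases i <;> simp [cE, EuclideanSpace.single_apply]

/-! ### Partial derivatives on `ℝ × ℝ` -/

noncomputable def d1 (f : ℝ × ℝ → ℝ) : ℝ × ℝ → ℝ := fun q => fderiv ℝ f q (1, 0)
noncomputable def d2 (f : ℝ × ℝ → ℝ) : ℝ × ℝ → ℝ := fun q => fderiv ℝ f q (0, 1)

lemma clm_eval (L : ℝ × ℝ →L[ℝ] ℝ) (a b : ℝ) :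
    L (a, b) = a * L (1, 0) + b * L (0, 1) := by
  have h : (a, b) = a • ((1 : ℝ), (0 : ℝ)) + b • ((0 : ℝ), (1 : ℝ)) := by
    simp [Prod.ext_iff]
  rw [h, map_add, L.map_smul, L.map_smul, smul_eq_mul, smul_eq_mul]

section Test

variable {f : ℝ × ℝ → ℝ}

lemma d1_cont (hf : ContDiff ℝ (⊤ : ℕ∞) f) : Continuous (d1 f) :=
  ((hf.fderiv_right (m := (⊤:ℕ∞)) (by simp)).continuous).clm_apply continuous_const

lemma d2_cont (hf : ContDiff ℝ (⊤ : ℕ∞) f) : Continuous (d2 f) :=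
  ((hf.fderiv_right (m := (⊤:ℕ∞)) (by simp)).continuous).clm_apply continuous_const

lemma d1_supp (hs : HasCompactSupport f) : HasCompactSupport (d1 f) :=
  hs.fderiv_apply (𝕜 := ℝ) _

lemma d2_supp (hs : HasCompactSupport f) : HasCompactSupport (d2 f) :=
  hs.fderiv_apply (𝕜 := ℝ) _

lemma hasDerivAt_radial (hf : ContDiff ℝ (⊤ : ℕ∞) f) (θ r : ℝ) :
    HasDerivAt (fun t => f (t * cos θ, t * sin θ))
      (cos θ * d1 f (r * cos θ, r * sin θ) + sin θ * d2 f (r * cos θ, r * sin θ)) r := by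
  have hγ : HasDerivAt (fun t : ℝ => (t * cos θ, t * sin θ)) (cos θ, sin θ) r := by
    simpa using ((hasDerivAt_id r).mul_const (cos θ)).prodMk ((hasDerivAt_id r).mul_const (sin θ))
  have hF : HasFDerivAt f (fderiv ℝ f (r * cos θ, r * sin θ)) (r * cos θ, r * sin θ) :=
    (hf.differentiable (by simp) _).hasFDerivAt
  have := hF.comp_hasDerivAt r hγ
  rwa [clm_eval] at this

lemma hasDerivAt_angular (hf : ContDiff ℝ (⊤ : ℕ∞) f) (r θ : ℝ) :
    HasDerivAt (fun t => f (r * cos t, r * sin t))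
      (r * (cos θ * d2 f (r * cos θ, r * sin θ) - sin θ * d1 f (r * cos θ, r * sin θ))) θ := by
  have hγ : HasDerivAt (fun t : ℝ => (r * cos t, r * sin t))
      (r * (-sin θ), r * cos θ) θ :=
    ((hasDerivAt_cos θ).const_mul r).prodMk ((hasDerivAt_sin θ).const_mul r)
  have hF : HasFDerivAt f (fderiv ℝ f (r * cos θ, r * sin θ)) (r * cos θ, r * sin θ) :=
    (hf.differentiable (by simp) _).hasFDerivAt
  have := hF.comp_hasDerivAt θ hγ
  rw [clm_eval] at this
  refine this.congr_deriv (Eq.symm ?_)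
  show r * (cos θ * d2 f _ - sin θ * d1 f _) = r * -sin θ * d1 f _ + r * cos θ * d2 f _
  ring

end Test

/-! ### Local integrability of `1/r` in the plane -/

noncomputable def base : ℝ × ℝ → ℝ := fun q => (Real.sqrt (q.1 ^ 2 + q.2 ^ 2))⁻¹

lemma continuous_polarCoord_symm' : Continuous (⇑(polarCoord.symm)) := by
  have h : (⇑(polarCoord.symm)) = fun p : ℝ × ℝ => (p.1 * cos p.2, p.1 * sin p.2) :=
    funext fun p => polarCoord_symm_apply p
  rw [h]
  exact (continuous_fst.mul (continuous_cos.comp continuous_snd)).prodMk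
    (continuous_fst.mul (continuous_sin.comp continuous_snd))

lemma base_locInt : LocallyIntegrable base volume := by
  rw [locallyIntegrable_iff]
  intro K hK
  obtain ⟨R, hR⟩ := hK.isBounded.subset_closedBall 0
  apply IntegrableOn.mono_set _ hR
  set B : ℝ × ℝ → ℝ × ℝ →L[ℝ] ℝ × ℝ := fun p =>
    LinearMap.toContinuousLinearMap (Matrix.toLin (Module.Basis.finTwoProd ℝ) (Module.Basis.finTwoProd ℝ)
      !![cos p.2, -p.1 * sin p.2; sin p.2, p.1 * cos p.2]) with hB
  have hB_det : ∀ p, (B p).det = p.1 := by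
    intro p
    conv_rhs => rw [← one_mul p.1, ← cos_sq_add_sin_sq p.2]
    simp only [hB, neg_mul, LinearMap.det_toContinuousLinearMap, LinearMap.det_toLin,
      Matrix.det_fin_two_of, sub_neg_eq_add]
    ring
  set s' : Set (ℝ × ℝ) := polarCoord.target ∩ (⇑(polarCoord.symm) ⁻¹' Metric.closedBall 0 R)
    with hs'
  have hs'meas : MeasurableSet s' :=
    polarCoord.open_target.measurableSet.inter
      (continuous_polarCoord_symm'.measurable (measurableSet_closedBall))
  have hderiv : ∀ p ∈ s', HasFDerivWithinAt (⇑(polarCoord.symm)) (B p) s' p := fun p _ =>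
    (hasFDerivAt_polarCoord_symm p).hasFDerivWithinAt
  have hinj : InjOn (⇑(polarCoord.symm)) s' := by
    have := polarCoord.symm.injOn
    exact this.mono inter_subset_left
  have hiff := integrableOn_image_iff_integrableOn_abs_det_fderiv_smul volume hs'meas hderiv
    hinj base
  have hsub : s' ⊆ Icc (0 : ℝ) (2 * R) ×ˢ Icc (-π) π := by
    rintro p ⟨hpt, hpb⟩
    rw [show polarCoord.target = Ioi (0 : ℝ) ×ˢ Ioo (-π) π from rfl, Set.mem_prod] at hpt
    have hp1 : 0 < p.1 := hpt.1
    have hp2 : p.2 ∈ Ioo (-π) π := hpt.2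
    have hb : ‖polarCoord.symm p‖ ≤ R := by
      simpa [Metric.mem_closedBall, dist_zero_right] using hpb
    have hcs : |cos p.2| ≥ 1/2 ∨ |sin p.2| ≥ 1/2 := by
      by_contra h
      push_neg at h
      have h1 := sin_sq_add_cos_sq p.2
      nlinarith [abs_nonneg (cos p.2), abs_nonneg (sin p.2), sq_abs (cos p.2), sq_abs (sin p.2),
        h.1, h.2]
    have hp1R : p.1 ≤ 2 * R := by
      rw [polarCoord_symm_apply] at hb
      rcases hcs with h | h
      · have h0 : ‖p.1 * cos p.2‖ ≤ ‖((p.1 * cos p.2, p.1 * sin p.2) : ℝ × ℝ)‖ :=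
          norm_fst_le ((p.1 * cos p.2, p.1 * sin p.2) : ℝ × ℝ)
        have h1 : |p.1 * cos p.2| ≤ R := le_trans ((Real.norm_eq_abs _) ▸ h0) hb
        rw [abs_mul, abs_of_pos hp1] at h1
        nlinarith
      · have h0 : ‖p.1 * sin p.2‖ ≤ ‖((p.1 * cos p.2, p.1 * sin p.2) : ℝ × ℝ)‖ :=
          norm_snd_le ((p.1 * cos p.2, p.1 * sin p.2) : ℝ × ℝ)
        have h1 : |p.1 * sin p.2| ≤ R := le_trans ((Real.norm_eq_abs _) ▸ h0) hb
        rw [abs_mul, abs_of_pos hp1] at h1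
        nlinarith
    rw [Set.mem_prod]
    exact ⟨⟨le_of_lt hp1, hp1R⟩, ⟨le_of_lt hp2.1, le_of_lt hp2.2⟩⟩
  have hfin : volume s' < ⊤ :=
    lt_of_le_of_lt (measure_mono hsub) (isCompact_Icc.prod isCompact_Icc).measure_lt_top
  have hEq : EqOn (fun _ : ℝ × ℝ => (1 : ℝ))
      (fun p => |(B p).det| • base (polarCoord.symm p)) s' := by
    rintro p ⟨hpt, _⟩
    rw [show polarCoord.target = Ioi (0 : ℝ) ×ˢ Ioo (-π) π from rfl, Set.mem_prod] at hpt
    have hp1 : 0 < p.1 := hpt.1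
    have hbase : base (polarCoord.symm p) = p.1⁻¹ := by
      rw [polarCoord_symm_apply]
      show (Real.sqrt ((p.1 * cos p.2) ^ 2 + (p.1 * sin p.2) ^ 2))⁻¹ = p.1⁻¹
      have : (p.1 * cos p.2) ^ 2 + (p.1 * sin p.2) ^ 2 = p.1 ^ 2 := by
        have := sin_sq_add_cos_sq p.2; nlinarith
      rw [this, Real.sqrt_sq (le_of_lt hp1)]
    simp only [hB_det, hbase, smul_eq_mul, abs_of_pos hp1]
    rw [mul_inv_cancel₀ (ne_of_gt hp1)]
  have hRHS : IntegrableOn (fun p => |(B p).det| • base (polarCoord.symm p)) s' :=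
    (integrableOn_const (hfin).ne).congr_fun hEq hs'meas
  have himg : IntegrableOn base (⇑(polarCoord.symm) '' s') := hiff.2 hRHS
  have himg2 : polarCoord.source ∩ Metric.closedBall 0 R ⊆ ⇑(polarCoord.symm) '' s' := by
    rintro q ⟨hq1, hq2⟩
    refine ⟨polarCoord q, ⟨polarCoord.map_source hq1, ?_⟩, polarCoord.left_inv hq1⟩
    rw [mem_preimage, polarCoord.left_inv hq1]
    exact hq2
  have h1 : IntegrableOn base (polarCoord.source ∩ Metric.closedBall 0 R) :=
    himg.mono_set himg2
  have hnull : volume (Metric.closedBall 0 R \ (polarCoord.source ∩ Metric.closedBall 0 R)) = 0 := by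
    have h0 : volume (polarCoord.sourceᶜ) = 0 := by
      have := polarCoord_source_ae_eq_univ
      rwa [ae_eq_univ] at this
    apply measure_mono_null _ h0
    intro q hq
    simp only [mem_diff, mem_inter_iff, not_and] at hq
    exact fun hs => (hq.2 hs) hq.1
  have h2 : IntegrableOn base (Metric.closedBall 0 R \ (polarCoord.source ∩ Metric.closedBall 0 R)) := by
    unfold IntegrableOn
    rw [Measure.restrict_eq_zero.2 hnull]
    exact integrable_zero_measure
  have := h1.union h2
  apply this.mono_set
  intro q hq
  by_cases h : q ∈ polarCoord.source ∩ Metric.closedBall 0 R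
  · exact Or.inl h
  · exact Or.inr ⟨hq, h⟩

/-! ### Integrability of the strain-type fields -/

lemma abs_num_le {A B CA CB : ℝ} (hA : |A| ≤ CA) (hB : |B| ≤ CB) (x y : ℝ) :
    |(x * A + y * B) / (2 * π * (x ^ 2 + y ^ 2))| ≤
      (CA + CB) / (2 * π) * (Real.sqrt (x ^ 2 + y ^ 2))⁻¹ := by
  have hCA0 : 0 ≤ CA := le_trans (abs_nonneg _) hA
  have hCB0 : 0 ≤ CB := le_trans (abs_nonneg _) hB
  set s := x ^ 2 + y ^ 2 with hsdef
  have hs0 : 0 ≤ s := by positivity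
  rcases eq_or_lt_of_le hs0 with h | h
  · have hx : x = 0 := by nlinarith [sq_nonneg x, sq_nonneg y]
    have hy : y = 0 := by nlinarith [sq_nonneg x, sq_nonneg y]
    rw [← h]
    simp [hx, hy]
  · have hx : |x| ≤ Real.sqrt s := by
      rw [← Real.sqrt_sq_eq_abs]; exact Real.sqrt_le_sqrt (by nlinarith)
    have hy : |y| ≤ Real.sqrt s := by
      rw [← Real.sqrt_sq_eq_abs]; exact Real.sqrt_le_sqrt (by nlinarith)
    have hsq : 0 < Real.sqrt s := Real.sqrt_pos.2 h
    have hss : Real.sqrt s * Real.sqrt s = s := Real.mul_self_sqrt hs0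
    rw [abs_div, abs_of_pos (by positivity : (0:ℝ) < 2 * π * s), div_le_iff₀ (by positivity)]
    have hnum : |x * A + y * B| ≤ Real.sqrt s * CA + Real.sqrt s * CB := by
      calc |x * A + y * B| ≤ |x * A| + |y * B| := abs_add_le _ _
        _ = |x| * |A| + |y| * |B| := by rw [abs_mul, abs_mul]
        _ ≤ Real.sqrt s * CA + Real.sqrt s * CB :=
            add_le_add (mul_le_mul hx hA (abs_nonneg _) (le_of_lt hsq))
              (mul_le_mul hy hB (abs_nonneg _) (le_of_lt hsq))
    have h1 : (Real.sqrt s)⁻¹ * s = Real.sqrt s := by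
      rw [inv_mul_eq_div, Real.div_sqrt]
    have key : (CA + CB) / (2 * π) * (Real.sqrt s)⁻¹ * (2 * π * s)
        = (CA + CB) * Real.sqrt s := by
      calc (CA + CB) / (2 * π) * (Real.sqrt s)⁻¹ * (2 * π * s)
          = (CA + CB) * ((Real.sqrt s)⁻¹ * s) * ((2 * π) / (2 * π)) := by ring
        _ = (CA + CB) * Real.sqrt s * 1 := by
            rw [h1, div_self (by positivity : (2 * π : ℝ) ≠ 0)]
        _ = (CA + CB) * Real.sqrt s := by ring
    calc |x * A + y * B| ≤ Real.sqrt s * CA + Real.sqrt s * CB := hnum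
      _ = (CA + CB) * Real.sqrt s := by ring
      _ = (CA + CB) / (2 * π) * (Real.sqrt s)⁻¹ * (2 * π * s) := key.symm

lemma integrable_of_bound {f : ℝ × ℝ → ℝ} {c : ℝ} {K : Set (ℝ × ℝ)} (hK : IsCompact K)
    (hm : AEStronglyMeasurable f volume) (hb : ∀ q, |f q| ≤ c * base q)
    (hz : ∀ q ∉ K, f q = 0) : Integrable f := by
  apply Integrable.mono' (g := K.indicator fun q => c * base q) _ hm
    (Filter.Eventually.of_forall fun q => ?_)
  · rw [integrable_indicator_iff hK.measurableSet]
    exact (base_locInt.integrableOn_isCompact hK).const_mul c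
  · by_cases hq : q ∈ K
    · rw [indicator_of_mem hq]
      exact (Real.norm_eq_abs _) ▸ hb q
    · rw [indicator_of_notMem hq, hz q hq]
      simp

lemma integrable_pattern {F G : ℝ × ℝ → ℝ} (hFc : Continuous F) (hGc : Continuous G)
    (hFs : HasCompactSupport F) (hGs : HasCompactSupport G) :
    Integrable (fun q : ℝ × ℝ => (q.1 * F q + q.2 * G q) / (2 * π * (q.1 ^ 2 + q.2 ^ 2))) := by
  obtain ⟨CF, hCF⟩ := hFs.exists_bound_of_continuous hFc
  obtain ⟨CG, hCG⟩ := hGs.exists_bound_of_continuous hGc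
  apply integrable_of_bound (c := (CF + CG) / (2 * π)) (K := tsupport F ∪ tsupport G)
    (hFs.union hGs)
  · apply Measurable.aestronglyMeasurable
    apply Measurable.div
    · exact (measurable_fst.mul hFc.measurable).add (measurable_snd.mul hGc.measurable)
    · fun_prop
  · intro q
    exact abs_num_le ((Real.norm_eq_abs _) ▸ hCF q) ((Real.norm_eq_abs _) ▸ hCG q) q.1 q.2
  · intro q hq
    have h1 : F q = 0 := image_eq_zero_of_notMem_tsupport fun h => hq (Or.inl h)
    have h2 : G q = 0 := image_eq_zero_of_notMem_tsupport fun h => hq (Or.inr h)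
    simp [h1, h2]

/-! ### Iterated-integral helpers -/

lemma sIP {s t : Set ℝ} (G : ℝ × ℝ → ℝ) (h : IntegrableOn G (s ×ˢ t)) :
    ∫ p in s ×ˢ t, G p = ∫ x in s, ∫ y in t, G (x, y) := by
  have h' : Integrable G ((volume.restrict s).prod (volume.restrict t)) := by
    rwa [Measure.prod_restrict, ← Measure.volume_eq_prod]
  calc ∫ p in s ×ˢ t, G p
      = ∫ p, G p ∂((volume.restrict s).prod (volume.restrict t)) := by
        rw [Measure.prod_restrict, ← Measure.volume_eq_prod]
    _ = ∫ x in s, ∫ y in t, G (x, y) := integral_prod G h'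

lemma sIP_symm {s t : Set ℝ} (G : ℝ × ℝ → ℝ) (h : IntegrableOn G (s ×ˢ t)) :
    ∫ p in s ×ˢ t, G p = ∫ y in t, ∫ x in s, G (x, y) := by
  have h' : Integrable G ((volume.restrict s).prod (volume.restrict t)) := by
    rwa [Measure.prod_restrict, ← Measure.volume_eq_prod]
  calc ∫ p in s ×ˢ t, G p
      = ∫ p, G p ∂((volume.restrict s).prod (volume.restrict t)) := by
        rw [Measure.prod_restrict, ← Measure.volume_eq_prod]
    _ = ∫ y in t, ∫ x in s, G (x, y) := integral_prod_symm G h'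

lemma integrableOn_target {G : ℝ × ℝ → ℝ} (hGc : Continuous G) {c R : ℝ}
    (hb : ∀ p, |G p| ≤ c) (hz : ∀ p : ℝ × ℝ, R < p.1 → G p = 0) :
    IntegrableOn G (Ioi (0 : ℝ) ×ˢ Ioo (-π) π) := by
  have hc0 : 0 ≤ c := le_trans (abs_nonneg _) (hb 0)
  apply Integrable.mono' (g := (Icc (0 : ℝ) R ×ˢ Icc (-π) π).indicator fun _ => c)
  · rw [integrable_indicator_iff (measurableSet_Icc.prod measurableSet_Icc)]
    exact integrableOn_const (isCompact_Icc.prod isCompact_Icc).measure_lt_top.ne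
  · exact hGc.aestronglyMeasurable.restrict
  · refine (ae_restrict_iff' (measurableSet_Ioi.prod measurableSet_Ioo)).2
      (Filter.Eventually.of_forall ?_)
    intro p hp
    rw [Set.mem_prod] at hp
    obtain ⟨hp1, hp2⟩ := hp
    by_cases hpR : p.1 ≤ R
    · have hmem : p ∈ Icc (0 : ℝ) R ×ˢ Icc (-π) π := by
        rw [Set.mem_prod]
        exact ⟨⟨le_of_lt hp1, hpR⟩, ⟨le_of_lt hp2.1, le_of_lt hp2.2⟩⟩
      rw [indicator_of_mem hmem]
      exact (Real.norm_eq_abs _) ▸ hb p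
    · rw [hz p (lt_of_not_ge hpR)]
      rw [norm_zero]
      exact Set.indicator_nonneg (fun _ _ => hc0) _

/-! ### The two key distributional identities in the plane -/

section Key

variable {f : ℝ × ℝ → ℝ}

lemma support_data (hf : ContDiff ℝ (⊤ : ℕ∞) f) (hsupp : HasCompactSupport f) :
    ∃ C R₀ : ℝ, 0 ≤ C ∧ 0 ≤ R₀ ∧ (∀ q, |d1 f q| ≤ C) ∧ (∀ q, |d2 f q| ≤ C) ∧
      (∀ r θ : ℝ, 2 * R₀ < r → f (r * cos θ, r * sin θ) = 0 ∧
        d1 f (r * cos θ, r * sin θ) = 0 ∧ d2 f (r * cos θ, r * sin θ) = 0) := by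
  obtain ⟨C, hC⟩ := (hsupp.fderiv (𝕜 := ℝ)).exists_bound_of_continuous
    ((hf.fderiv_right (m := (⊤:ℕ∞)) (by simp)).continuous)
  obtain ⟨R, hR⟩ := hsupp.isBounded.subset_closedBall 0
  refine ⟨C, max R 0, le_trans (norm_nonneg _) (hC 0), le_max_right _ _, ?_, ?_, ?_⟩
  · intro q
    calc |d1 f q| = ‖fderiv ℝ f q ((1 : ℝ), (0 : ℝ))‖ := rfl
      _ ≤ ‖fderiv ℝ f q‖ * ‖((1 : ℝ), (0 : ℝ))‖ := (fderiv ℝ f q).le_opNorm _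
      _ = ‖fderiv ℝ f q‖ := by
          simp [Prod.norm_def]
      _ ≤ C := hC q
  · intro q
    calc |d2 f q| = ‖fderiv ℝ f q ((0 : ℝ), (1 : ℝ))‖ := rfl
      _ ≤ ‖fderiv ℝ f q‖ * ‖((0 : ℝ), (1 : ℝ))‖ := (fderiv ℝ f q).le_opNorm _
      _ = ‖fderiv ℝ f q‖ := by
          simp [Prod.norm_def]
      _ ≤ C := hC q
  · intro r θ hr
    have hR0 : (0 : ℝ) ≤ max R 0 := le_max_right _ _
    have hrpos : 0 < r := by nlinarith
    have hcs : 1/2 ≤ |cos θ| ∨ 1/2 ≤ |sin θ| := by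
      by_contra h
      push_neg at h
      have h1 := sin_sq_add_cos_sq θ
      nlinarith [abs_nonneg (cos θ), abs_nonneg (sin θ), sq_abs (cos θ), sq_abs (sin θ),
        h.1, h.2]
    have hnorm : max R 0 < ‖((r * cos θ, r * sin θ) : ℝ × ℝ)‖ := by
      rcases hcs with h | h
      · have h0 : ‖r * cos θ‖ ≤ ‖((r * cos θ, r * sin θ) : ℝ × ℝ)‖ :=
          norm_fst_le ((r * cos θ, r * sin θ) : ℝ × ℝ)
        apply lt_of_lt_of_le _ ((Real.norm_eq_abs _) ▸ h0)
        show max R 0 < |r * cos θ|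
        rw [abs_mul, abs_of_pos hrpos]
        nlinarith
      · have h0 : ‖r * sin θ‖ ≤ ‖((r * cos θ, r * sin θ) : ℝ × ℝ)‖ :=
          norm_snd_le ((r * cos θ, r * sin θ) : ℝ × ℝ)
        apply lt_of_lt_of_le _ ((Real.norm_eq_abs _) ▸ h0)
        show max R 0 < |r * sin θ|
        rw [abs_mul, abs_of_pos hrpos]
        nlinarith
    have hnmem : (r * cos θ, r * sin θ) ∉ tsupport f := by
      intro hmem
      have := hR hmem
      rw [Metric.mem_closedBall, dist_zero_right] at this
      have : ‖((r * cos θ, r * sin θ) : ℝ × ℝ)‖ ≤ max R 0 :=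
        le_trans this (le_max_left _ _)
      linarith
    have hfz : fderiv ℝ f (r * cos θ, r * sin θ) = 0 := by
      by_contra h'
      exact hnmem (support_fderiv_subset ℝ (Function.mem_support.2 h'))
    exact ⟨image_eq_zero_of_notMem_tsupport hnmem,
      by simp [d1, hfz], by simp [d2, hfz]⟩

lemma div_lemma (hf : ContDiff ℝ (⊤ : ℕ∞) f) (hsupp : HasCompactSupport f) :
    ∫ q : ℝ × ℝ, (q.1 * d1 f q + q.2 * d2 f q) / (2 * π * (q.1 ^ 2 + q.2 ^ 2)) = -f 0 := by
  obtain ⟨C, R₀, hC0, hR0, hC1, hC2, hout⟩ := support_data hf hsupp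
  set F := fun q : ℝ × ℝ => (q.1 * d1 f q + q.2 * d2 f q) / (2 * π * (q.1 ^ 2 + q.2 ^ 2)) with hF
  rw [← integral_comp_polarCoord_symm F]
  set G : ℝ × ℝ → ℝ := fun p =>
    (cos p.2 * d1 f (p.1 * cos p.2, p.1 * sin p.2)
      + sin p.2 * d2 f (p.1 * cos p.2, p.1 * sin p.2)) / (2 * π) with hG
  have hstep1 : EqOn (fun p : ℝ × ℝ => p.1 • F (polarCoord.symm p)) G polarCoord.target := by
    intro p hp
    rw [show polarCoord.target = Ioi (0 : ℝ) ×ˢ Ioo (-π) π from rfl, Set.mem_prod] at hp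
    have hr : 0 < p.1 := hp.1
    have hden : (p.1 * cos p.2) ^ 2 + (p.1 * sin p.2) ^ 2 = p.1 ^ 2 := by
      have := sin_sq_add_cos_sq p.2; nlinarith
    show p.1 • F (polarCoord.symm p) = G p
    rw [polarCoord_symm_apply]
    simp only [hF, hG, smul_eq_mul, hden]
    have hπ : (π : ℝ) ≠ 0 := pi_ne_zero
    field_simp
  rw [setIntegral_congr_fun polarCoord.open_target.measurableSet hstep1]
  have hGc : Continuous G := by
    apply Continuous.div_const
    apply Continuous.add
    · exact (continuous_cos.comp continuous_snd).mul
        ((d1_cont hf).comp ((continuous_fst.mul (continuous_cos.comp continuous_snd)).prodMk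
          (continuous_fst.mul (continuous_sin.comp continuous_snd))))
    · exact (continuous_sin.comp continuous_snd).mul
        ((d2_cont hf).comp ((continuous_fst.mul (continuous_cos.comp continuous_snd)).prodMk
          (continuous_fst.mul (continuous_sin.comp continuous_snd))))
  have hGb : ∀ p, |G p| ≤ (C + C) / (2 * π) := by
    intro p
    rw [hG, abs_div, abs_of_pos (by positivity : (0:ℝ) < 2 * π)]
    apply div_le_div_of_nonneg_right ?_ ?_ |>.trans_eq rfl
    · calc |cos p.2 * d1 f _ + sin p.2 * d2 f _|
          ≤ |cos p.2 * d1 f _| + |sin p.2 * d2 f _| := abs_add_le _ _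
        _ = |cos p.2| * |d1 f _| + |sin p.2| * |d2 f _| := by rw [abs_mul, abs_mul]
        _ ≤ 1 * C + 1 * C := add_le_add
            (mul_le_mul (abs_cos_le_one _) (hC1 _) (abs_nonneg _) zero_le_one)
            (mul_le_mul (abs_sin_le_one _) (hC2 _) (abs_nonneg _) zero_le_one)
        _ = C + C := by ring
    · positivity
  have hGz : ∀ p : ℝ × ℝ, 2 * R₀ < p.1 → G p = 0 := by
    intro p hp
    obtain ⟨-, h1, h2⟩ := hout p.1 p.2 hp
    rw [hG]
    simp only [h1, h2, mul_zero, add_zero, zero_div]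
  have hGint : IntegrableOn G (Ioi (0 : ℝ) ×ˢ Ioo (-π) π) :=
    integrableOn_target hGc hGb hGz
  have htgt : polarCoord.target = Ioi (0 : ℝ) ×ˢ Ioo (-π) π := rfl
  rw [htgt, sIP_symm G hGint]
  have hinner : ∀ θ : ℝ, ∫ r in Ioi (0 : ℝ), G (r, θ) = -f 0 / (2 * π) := by
    intro θ
    set g : ℝ → ℝ := fun r => f (r * cos θ, r * sin θ) with hg
    set g' : ℝ → ℝ := fun r =>
      cos θ * d1 f (r * cos θ, r * sin θ) + sin θ * d2 f (r * cos θ, r * sin θ) with hg'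
    have hGg : ∀ r : ℝ, G (r, θ) = g' r / (2 * π) := fun r => rfl
    have hint : IntegrableOn g' (Ioi (0 : ℝ)) := by
      apply Integrable.mono' (g := (Icc (0 : ℝ) (2 * R₀)).indicator fun _ => C + C)
      · rw [integrable_indicator_iff measurableSet_Icc]
        exact integrableOn_const isCompact_Icc.measure_lt_top.ne
      · apply Continuous.aestronglyMeasurable ?_ |>.restrict
        exact ((continuous_const.mul ((d1_cont hf).comp
            ((continuous_id.mul continuous_const).prodMk
              (continuous_id.mul continuous_const)))).add
          (continuous_const.mul ((d2_cont hf).comp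
            ((continuous_id.mul continuous_const).prodMk
              (continuous_id.mul continuous_const)))))
      · refine (ae_restrict_iff' measurableSet_Ioi).2 (Filter.Eventually.of_forall ?_)
        intro r hr
        by_cases hrR : r ≤ 2 * R₀
        · rw [indicator_of_mem (Set.mem_Icc.2 ⟨le_of_lt hr, hrR⟩)]
          rw [Real.norm_eq_abs]
          calc |g' r| ≤ |cos θ * d1 f _| + |sin θ * d2 f _| := abs_add_le _ _
            _ = |cos θ| * |d1 f _| + |sin θ| * |d2 f _| := by rw [abs_mul, abs_mul]
            _ ≤ 1 * C + 1 * C := add_le_add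
                (mul_le_mul (abs_cos_le_one _) (hC1 _) (abs_nonneg _) zero_le_one)
                (mul_le_mul (abs_sin_le_one _) (hC2 _) (abs_nonneg _) zero_le_one)
            _ = C + C := by ring
        · obtain ⟨-, h1, h2⟩ := hout r θ (lt_of_not_ge hrR)
          rw [hg']
          simp only [h1, h2, mul_zero, add_zero, norm_zero]
          exact Set.indicator_nonneg (fun _ _ => by linarith) _
    have hcont : ContinuousWithinAt g (Ici 0) 0 :=
      ((hf.continuous).comp ((continuous_id.mul continuous_const).prodMk
        (continuous_id.mul continuous_const))).continuousWithinAt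
    have hderiv : ∀ r ∈ Ioi (0 : ℝ), HasDerivAt g (g' r) r := fun r _ =>
      hasDerivAt_radial hf θ r
    have htend : Tendsto g atTop (𝓝 0) := by
      apply Tendsto.congr' _ tendsto_const_nhds
      filter_upwards [Filter.eventually_gt_atTop (2 * R₀)] with r hr
      exact ((hout r θ hr).1).symm
    have hftc := integral_Ioi_of_hasDerivAt_of_tendsto hcont hderiv hint htend
    have hg0 : g 0 = f 0 := by
      show f (0 * cos θ, 0 * sin θ) = f 0
      norm_num
      rfl
    calc ∫ r in Ioi (0 : ℝ), G (r, θ) = ∫ r in Ioi (0 : ℝ), g' r / (2 * π) := by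
          simp only [hGg]
      _ = (∫ r in Ioi (0 : ℝ), g' r) / (2 * π) := integral_div _ _
      _ = (0 - g 0) / (2 * π) := by rw [hftc]
      _ = -f 0 / (2 * π) := by rw [hg0]; ring_nf
  calc ∫ θ in Ioo (-π) π, ∫ r in Ioi (0 : ℝ), G (r, θ)
      = ∫ _ in Ioo (-π) π, -f 0 / (2 * π) := by
        apply setIntegral_congr_fun measurableSet_Ioo
        intro θ _
        exact hinner θ
    _ = (volume (Ioo (-π) π)).toReal • (-f 0 / (2 * π)) := setIntegral_const _
    _ = -f 0 := by
        rw [Real.volume_Ioo]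
        rw [ENNReal.toReal_ofReal (by linarith [pi_pos] : (0:ℝ) ≤ π - -π)]
        rw [smul_eq_mul]
        have hπ : (π : ℝ) ≠ 0 := pi_ne_zero
        field_simp
        ring

lemma curl_lemma (hf : ContDiff ℝ (⊤ : ℕ∞) f) (hsupp : HasCompactSupport f) :
    ∫ q : ℝ × ℝ, (q.1 * d2 f q - q.2 * d1 f q) / (2 * π * (q.1 ^ 2 + q.2 ^ 2)) = 0 := by
  obtain ⟨C, R₀, hC0, hR0, hC1, hC2, hout⟩ := support_data hf hsupp
  set F := fun q : ℝ × ℝ => (q.1 * d2 f q - q.2 * d1 f q) / (2 * π * (q.1 ^ 2 + q.2 ^ 2)) with hF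
  rw [← integral_comp_polarCoord_symm F]
  set G : ℝ × ℝ → ℝ := fun p =>
    (cos p.2 * d2 f (p.1 * cos p.2, p.1 * sin p.2)
      - sin p.2 * d1 f (p.1 * cos p.2, p.1 * sin p.2)) / (2 * π) with hG
  have hstep1 : EqOn (fun p : ℝ × ℝ => p.1 • F (polarCoord.symm p)) G polarCoord.target := by
    intro p hp
    rw [show polarCoord.target = Ioi (0 : ℝ) ×ˢ Ioo (-π) π from rfl, Set.mem_prod] at hp
    have hr : 0 < p.1 := hp.1
    have hden : (p.1 * cos p.2) ^ 2 + (p.1 * sin p.2) ^ 2 = p.1 ^ 2 := by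
      have := sin_sq_add_cos_sq p.2; nlinarith
    show p.1 • F (polarCoord.symm p) = G p
    rw [polarCoord_symm_apply]
    simp only [hF, hG, smul_eq_mul, hden]
    have hπ : (π : ℝ) ≠ 0 := pi_ne_zero
    field_simp
  rw [setIntegral_congr_fun polarCoord.open_target.measurableSet hstep1]
  have hGc : Continuous G := by
    apply Continuous.div_const
    apply Continuous.sub
    · exact (continuous_cos.comp continuous_snd).mul
        ((d2_cont hf).comp ((continuous_fst.mul (continuous_cos.comp continuous_snd)).prodMk
          (continuous_fst.mul (continuous_sin.comp continuous_snd))))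
    · exact (continuous_sin.comp continuous_snd).mul
        ((d1_cont hf).comp ((continuous_fst.mul (continuous_cos.comp continuous_snd)).prodMk
          (continuous_fst.mul (continuous_sin.comp continuous_snd))))
  have hGb : ∀ p, |G p| ≤ (C + C) / (2 * π) := by
    intro p
    rw [hG, abs_div, abs_of_pos (by positivity : (0:ℝ) < 2 * π)]
    apply div_le_div_of_nonneg_right ?_ ?_ |>.trans_eq rfl
    · calc |cos p.2 * d2 f _ - sin p.2 * d1 f _|
          ≤ |cos p.2 * d2 f _| + |sin p.2 * d1 f _| := abs_sub _ _
        _ = |cos p.2| * |d2 f _| + |sin p.2| * |d1 f _| := by rw [abs_mul, abs_mul]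
        _ ≤ 1 * C + 1 * C := add_le_add
            (mul_le_mul (abs_cos_le_one _) (hC2 _) (abs_nonneg _) zero_le_one)
            (mul_le_mul (abs_sin_le_one _) (hC1 _) (abs_nonneg _) zero_le_one)
        _ = C + C := by ring
    · positivity
  have hGz : ∀ p : ℝ × ℝ, 2 * R₀ < p.1 → G p = 0 := by
    intro p hp
    obtain ⟨-, h1, h2⟩ := hout p.1 p.2 hp
    rw [hG]
    simp only [h1, h2, mul_zero, sub_zero, zero_sub, neg_zero, zero_div]
  have hGint : IntegrableOn G (Ioi (0 : ℝ) ×ˢ Ioo (-π) π) :=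
    integrableOn_target hGc hGb hGz
  have htgt : polarCoord.target = Ioi (0 : ℝ) ×ˢ Ioo (-π) π := rfl
  rw [htgt, sIP G hGint]
  have hinner : ∀ r : ℝ, r ∈ Ioi (0:ℝ) → ∫ θ in Ioo (-π) π, G (r, θ) = 0 := by
    intro r hr
    have hrpos : (0:ℝ) < r := hr
    set h : ℝ → ℝ := fun θ => f (r * cos θ, r * sin θ) with hh
    set h' : ℝ → ℝ := fun θ =>
      r * (cos θ * d2 f (r * cos θ, r * sin θ) - sin θ * d1 f (r * cos θ, r * sin θ)) with hh'
    have hGh : ∀ θ : ℝ, G (r, θ) = h' θ / (2 * π * r) := by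
      intro θ
      show (cos θ * d2 f _ - sin θ * d1 f _) / (2 * π) = h' θ / (2 * π * r)
      rw [hh']
      have hπ : (π : ℝ) ≠ 0 := pi_ne_zero
      field_simp
    have hderiv : ∀ θ ∈ uIcc (-π) π, HasDerivAt h (h' θ) θ := fun θ _ =>
      hasDerivAt_angular hf r θ
    have hcont' : Continuous h' := by
      apply continuous_const.mul
      apply Continuous.sub
      · exact continuous_cos.mul ((d2_cont hf).comp
          ((continuous_const.mul continuous_cos).prodMk (continuous_const.mul continuous_sin)))
      · exact continuous_sin.mul ((d1_cont hf).comp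
          ((continuous_const.mul continuous_cos).prodMk (continuous_const.mul continuous_sin)))
    have hfund : ∫ θ in (-π)..π, h' θ = h π - h (-π) :=
      intervalIntegral.integral_eq_sub_of_hasDerivAt hderiv
        (hcont'.intervalIntegrable _ _)
    have hends : h π - h (-π) = 0 := by
      rw [hh]
      simp [cos_pi, sin_pi, cos_neg, sin_neg]
    calc ∫ θ in Ioo (-π) π, G (r, θ) = ∫ θ in Ioo (-π) π, h' θ / (2 * π * r) := by
          simp only [hGh]
      _ = (∫ θ in Ioo (-π) π, h' θ) / (2 * π * r) := integral_div _ _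
      _ = (∫ θ in Ioc (-π) π, h' θ) / (2 * π * r) := by
          rw [integral_Ioc_eq_integral_Ioo]
      _ = (∫ θ in (-π)..π, h' θ) / (2 * π * r) := by
          rw [intervalIntegral.integral_of_le (by linarith [pi_pos])]
      _ = 0 := by rw [hfund, hends]; simp
  calc ∫ r in Ioi (0:ℝ), ∫ θ in Ioo (-π) π, G (r, θ)
      = ∫ _ in Ioi (0:ℝ), (0:ℝ) := setIntegral_congr_fun measurableSet_Ioi hinner
    _ = 0 := by simp

end Key

/-! ### Transfer of derivatives to the Euclidean plane -/

lemma pd_comp {f : EuclideanSpace ℝ (Fin 2) → ℝ} (hf : Differentiable ℝ f) (α : Fin 2)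
    (v : ℝ × ℝ) (hv : cE v = EuclideanSpace.single α 1) (q : ℝ × ℝ) :
    pd α f (cE q) = fderiv ℝ (fun x => f (cE x)) q v := by
  have hcomp : (fun x => f (cE x)) = f ∘ ⇑cE := rfl
  rw [hcomp, fderiv_comp q (hf _) cE.differentiableAt]
  rw [ContinuousLinearMap.coe_comp', Function.comp_apply, ContinuousLinearEquiv.fderiv]
  show pd α f (cE q) = fderiv ℝ f (cE q) (cE v)
  rw [hv]
  rfl

lemma pd_contDiff {f : EuclideanSpace ℝ (Fin 2) → ℝ} (hf : ContDiff ℝ (⊤ : ℕ∞) f) (α : Fin 2) :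
    ContDiff ℝ (⊤ : ℕ∞) (pd α f) :=
  (hf.fderiv_right (m := (⊤:ℕ∞)) (by simp)).clm_apply contDiff_const

lemma pd_supp {f : EuclideanSpace ℝ (Fin 2) → ℝ} (hs : HasCompactSupport f) (α : Fin 2) :
    HasCompactSupport (pd α f) :=
  hs.fderiv_apply (𝕜 := ℝ) _

lemma pd_comm {f : EuclideanSpace ℝ (Fin 2) → ℝ} (hf : ContDiff ℝ (⊤ : ℕ∞) f) (α β : Fin 2)
    (x : EuclideanSpace ℝ (Fin 2)) : pd α (pd β f) x = pd β (pd α f) x := by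
  have h1 : ∀ y, HasFDerivAt f (fderiv ℝ f y) y := fun y =>
    (hf.differentiable (by simp) y).hasFDerivAt
  have h2 : HasFDerivAt (fderiv ℝ f) (fderiv ℝ (fderiv ℝ f) x) x :=
    (((hf.fderiv_right (m := (⊤:ℕ∞)) (by simp)).differentiable (by simp)) x).hasFDerivAt
  have hsym := second_derivative_symmetric h1 h2 (EuclideanSpace.single α 1)
    (EuclideanSpace.single β 1)
  have hdiff : DifferentiableAt ℝ (fderiv ℝ f) x :=
    ((hf.fderiv_right (m := (⊤:ℕ∞)) (by simp)).differentiable (by simp)) x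
  show fderiv ℝ (pd β f) x (EuclideanSpace.single α 1)
      = fderiv ℝ (pd α f) x (EuclideanSpace.single β 1)
  have e1 : pd β f = fun y => (fderiv ℝ f y) (EuclideanSpace.single β 1) := rfl
  have e2 : pd α f = fun y => (fderiv ℝ f y) (EuclideanSpace.single α 1) := rfl
  rw [e1, e2, fderiv_clm_apply hdiff (differentiableAt_const _),
    fderiv_clm_apply hdiff (differentiableAt_const _)]
  simp only [fderiv_const, fderiv_fun_const, Pi.zero_apply, ContinuousLinearMap.comp_zero, zero_add,
    ContinuousLinearMap.add_apply, ContinuousLinearMap.flip_apply]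
  exact hsym

/-! ### Local integrability on the Euclidean plane -/

lemma locInt_E2 (a b : ℝ) :
    LocallyIntegrable
      (fun p : EuclideanSpace ℝ (Fin 2) => (a * p 0 + b * p 1) / (2 * π * ((p 0) ^ 2 + (p 1) ^ 2)))
      volume := by
  set h : EuclideanSpace ℝ (Fin 2) → ℝ :=
    fun p => (a * p 0 + b * p 1) / (2 * π * ((p 0) ^ 2 + (p 1) ^ 2)) with hh
  rw [locallyIntegrable_iff]
  intro K hK
  have heq : (fun q : ℝ × ℝ => (K.indicator h) (cE q))
      = (⇑cE ⁻¹' K).indicator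
        (fun q : ℝ × ℝ => (a * q.1 + b * q.2) / (2 * π * (q.1 ^ 2 + q.2 ^ 2))) := by
    funext q
    by_cases hq : cE q ∈ K
    · rw [indicator_of_mem hq, indicator_of_mem (by exact hq)]
      rfl
    · rw [indicator_of_notMem hq, indicator_of_notMem (by exact hq)]
  have hK' : IsCompact (⇑cE ⁻¹' K) := cE.toHomeomorph.isCompact_preimage.2 hK
  have main : IntegrableOn
      (fun q : ℝ × ℝ => (a * q.1 + b * q.2) / (2 * π * (q.1 ^ 2 + q.2 ^ 2))) (⇑cE ⁻¹' K) := ?_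
  · have h2 : Integrable (fun q : ℝ × ℝ => (K.indicator h) (cE q)) volume := by
      rw [heq, integrable_indicator_iff hK'.measurableSet]
      exact main
    have h3 : Integrable (K.indicator h) volume := (integrable_cE _).1 h2
    exact (integrable_indicator_iff hK.measurableSet).1 h3
  apply Integrable.mono' ((base_locInt.integrableOn_isCompact hK').const_mul ((|a| + |b|) / (2 * π)))
  · apply Measurable.aestronglyMeasurable ?_ |>.restrict
    apply Measurable.div
    · fun_prop
    · fun_prop
  · refine (ae_restrict_iff' hK'.measurableSet).2 (Filter.Eventually.of_forall ?_)
    intro q _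
    rw [Real.norm_eq_abs]
    have := abs_num_le (le_refl |a|) (le_refl |b|) q.1 q.2
    calc |(a * q.1 + b * q.2) / (2 * π * (q.1 ^ 2 + q.2 ^ 2))|
        = |(q.1 * a + q.2 * b) / (2 * π * (q.1 ^ 2 + q.2 ^ 2))| := by ring_nf
      _ ≤ (|a| + |b|) / (2 * π) * (Real.sqrt (q.1 ^ 2 + q.2 ^ 2))⁻¹ := this
      _ = (|a| + |b|) / (2 * π) * base q := rfl

/-! ### The pointwise algebraic identity -/

lemma alg (x y d a b e Bx By : ℝ) :
    (-By * x - Bx * y) / d * e + (By * x + Bx * y) / d * a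
      - 2 * ((-By * y + Bx * x) / d) * b
    = By * ((x * a + y * b) / d) - By * ((x * e - y * b) / d)
      - Bx * ((x * b + y * e) / d) - Bx * ((x * b - y * a) / d) := by
  rcases eq_or_ne d 0 with h | h
  · simp [h]
  · field_simp
    ring

end EdgeDisloc

open EdgeDisloc

/-- **Incompatibility of an edge dislocation** (equation (2.41) of the paper).
The strain components are locally integrable and the distributional planar
incompatibility `∂_y²E_xx + ∂_x²E_yy − 2∂_x∂_yE_xy` equals
`B_y ∂_xδ₀ − B_x ∂_yδ₀`. -/
theorem edge_dislocation_incompatibility (Bx By : ℝ) :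
    LocallyIntegrable (Exx Bx By) volume ∧
    LocallyIntegrable (Exy Bx By) volume ∧
    LocallyIntegrable (Eyy Bx By) volume ∧
    ∀ φ : EuclideanSpace ℝ (Fin 2) → ℝ, ContDiff ℝ (⊤ : ℕ∞) φ → HasCompactSupport φ →
      ∫ p : EuclideanSpace ℝ (Fin 2),
          (Exx Bx By p * pd 1 (pd 1 φ) p + Eyy Bx By p * pd 0 (pd 0 φ) p
            - 2 * Exy Bx By p * pd 0 (pd 1 φ) p)
        = -By * pd 0 φ 0 + Bx * pd 1 φ 0 := by
  refine ⟨?_, ?_, ?_, ?_⟩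
  · have h := locInt_E2 (-By) (-Bx)
    have : Exx Bx By = fun p : EuclideanSpace ℝ (Fin 2) =>
        ((-By) * p 0 + (-Bx) * p 1) / (2 * π * ((p 0) ^ 2 + (p 1) ^ 2)) := by
      funext p
      show (-By * p 0 - Bx * p 1) / _ = _
      congr 1
      ring
    rw [this]
    exact h
  · have h := locInt_E2 Bx (-By)
    have : Exy Bx By = fun p : EuclideanSpace ℝ (Fin 2) =>
        (Bx * p 0 + (-By) * p 1) / (2 * π * ((p 0) ^ 2 + (p 1) ^ 2)) := by
      funext p
      show (-By * p 1 + Bx * p 0) / _ = _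
      congr 1
      ring
    rw [this]
    exact h
  · have h := locInt_E2 By Bx
    have : Eyy Bx By = fun p : EuclideanSpace ℝ (Fin 2) =>
        (By * p 0 + Bx * p 1) / (2 * π * ((p 0) ^ 2 + (p 1) ^ 2)) := rfl
    rw [this]
    exact h
  · intro φ hφ hφs
    -- the composed first derivatives
    set ψ₀ : ℝ × ℝ → ℝ := fun q => pd 0 φ (cE q) with hψ₀
    set ψ₁ : ℝ × ℝ → ℝ := fun q => pd 1 φ (cE q) with hψ₁
    have hψ₀c : ContDiff ℝ (⊤ : ℕ∞) ψ₀ := (pd_contDiff hφ 0).comp cE.contDiff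
    have hψ₁c : ContDiff ℝ (⊤ : ℕ∞) ψ₁ := (pd_contDiff hφ 1).comp cE.contDiff
    have hψ₀s : HasCompactSupport ψ₀ :=
      (pd_supp hφs 0).comp_isClosedEmbedding cE.toHomeomorph.isClosedEmbedding
    have hψ₁s : HasCompactSupport ψ₁ :=
      (pd_supp hφs 1).comp_isClosedEmbedding cE.toHomeomorph.isClosedEmbedding
    have hpd0 : Differentiable ℝ (pd 0 φ) := (pd_contDiff hφ 0).differentiable (by simp)
    have hpd1 : Differentiable ℝ (pd 1 φ) := (pd_contDiff hφ 1).differentiable (by simp)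
    -- identifications of second derivatives
    have hd1ψ₀ : ∀ q, d1 ψ₀ q = pd 0 (pd 0 φ) (cE q) := fun q =>
      (pd_comp hpd0 0 (1, 0) cE_v0 q).symm
    have hd2ψ₀ : ∀ q, d2 ψ₀ q = pd 1 (pd 0 φ) (cE q) := fun q =>
      (pd_comp hpd0 1 (0, 1) cE_v1 q).symm
    have hd1ψ₁ : ∀ q, d1 ψ₁ q = pd 0 (pd 1 φ) (cE q) := fun q =>
      (pd_comp hpd1 0 (1, 0) cE_v0 q).symm
    have hd2ψ₁ : ∀ q, d2 ψ₁ q = pd 1 (pd 1 φ) (cE q) := fun q =>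
      (pd_comp hpd1 1 (0, 1) cE_v1 q).symm
    have hswap : ∀ q, d2 ψ₀ q = d1 ψ₁ q := fun q => by
      rw [hd2ψ₀, hd1ψ₁, pd_comm hφ 1 0]
    -- the four basic integrands
    set DIV0 : ℝ × ℝ → ℝ :=
      fun q => (q.1 * d1 ψ₀ q + q.2 * d2 ψ₀ q) / (2 * π * (q.1 ^ 2 + q.2 ^ 2)) with hDIV0
    set DIV1 : ℝ × ℝ → ℝ :=
      fun q => (q.1 * d1 ψ₁ q + q.2 * d2 ψ₁ q) / (2 * π * (q.1 ^ 2 + q.2 ^ 2)) with hDIV1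
    set CURL0 : ℝ × ℝ → ℝ :=
      fun q => (q.1 * d2 ψ₀ q - q.2 * d1 ψ₀ q) / (2 * π * (q.1 ^ 2 + q.2 ^ 2)) with hCURL0
    set CURL1 : ℝ × ℝ → ℝ :=
      fun q => (q.1 * d2 ψ₁ q - q.2 * d1 ψ₁ q) / (2 * π * (q.1 ^ 2 + q.2 ^ 2)) with hCURL1
    have hIDIV0 : Integrable DIV0 :=
      integrable_pattern (d1_cont hψ₀c) (d2_cont hψ₀c) (d1_supp hψ₀s) (d2_supp hψ₀s)
    have hIDIV1 : Integrable DIV1 :=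
      integrable_pattern (d1_cont hψ₁c) (d2_cont hψ₁c) (d1_supp hψ₁s) (d2_supp hψ₁s)
    have hnsupp0 : HasCompactSupport (fun q : ℝ × ℝ => -(d1 ψ₀ q)) :=
      (d1_supp hψ₀s).comp_left (g := Neg.neg) neg_zero
    have hnsupp1 : HasCompactSupport (fun q : ℝ × ℝ => -(d1 ψ₁ q)) :=
      (d1_supp hψ₁s).comp_left (g := Neg.neg) neg_zero
    have hICURL0 : Integrable CURL0 := by
      have h := integrable_pattern (F := d2 ψ₀) (G := fun q => -(d1 ψ₀ q))
        (d2_cont hψ₀c) (d1_cont hψ₀c).neg (d2_supp hψ₀s) hnsupp0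
      apply h.congr
      filter_upwards with q
      rw [hCURL0]
      ring_nf
    have hICURL1 : Integrable CURL1 := by
      have h := integrable_pattern (F := d2 ψ₁) (G := fun q => -(d1 ψ₁ q))
        (d2_cont hψ₁c) (d1_cont hψ₁c).neg (d2_supp hψ₁s) hnsupp1
      apply h.congr
      filter_upwards with q
      rw [hCURL1]
      ring_nf
    -- the pointwise decomposition of the integrand
    have key : ∀ q : ℝ × ℝ,
        Exx Bx By (cE q) * pd 1 (pd 1 φ) (cE q) + Eyy Bx By (cE q) * pd 0 (pd 0 φ) (cE q)
          - 2 * Exy Bx By (cE q) * pd 0 (pd 1 φ) (cE q)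
        = By * DIV0 q - By * CURL1 q - Bx * DIV1 q - Bx * CURL0 q := by
      intro q
      have e11 : pd 1 (pd 1 φ) (cE q) = d2 ψ₁ q := (hd2ψ₁ q).symm
      have e00 : pd 0 (pd 0 φ) (cE q) = d1 ψ₀ q := (hd1ψ₀ q).symm
      have e01 : pd 0 (pd 1 φ) (cE q) = d1 ψ₁ q := (hd1ψ₁ q).symm
      rw [e11, e00, e01]
      simp only [Exx, Eyy, Exy, hDIV0, hDIV1, hCURL0, hCURL1, cE_apply_fst, cE_apply_snd]
      rw [hswap q]
      exact alg q.1 q.2 (2 * π * (q.1 ^ 2 + q.2 ^ 2)) (d1 ψ₀ q) (d1 ψ₁ q) (d2 ψ₁ q) Bx By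
    rw [← integral_cE (fun p => Exx Bx By p * pd 1 (pd 1 φ) p + Eyy Bx By p * pd 0 (pd 0 φ) p
      - 2 * Exy Bx By p * pd 0 (pd 1 φ) p)]
    rw [show (fun q : ℝ × ℝ => Exx Bx By (cE q) * pd 1 (pd 1 φ) (cE q)
        + Eyy Bx By (cE q) * pd 0 (pd 0 φ) (cE q)
        - 2 * Exy Bx By (cE q) * pd 0 (pd 1 φ) (cE q))
      = fun q : ℝ × ℝ => By * DIV0 q - By * CURL1 q - Bx * DIV1 q - Bx * CURL0 q
      from funext key]
    have hA1 : Integrable (fun q : ℝ × ℝ => By * DIV0 q - By * CURL1 q) :=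
      (hIDIV0.const_mul By).sub (hICURL1.const_mul By)
    have hA2 : Integrable (fun q : ℝ × ℝ => By * DIV0 q - By * CURL1 q - Bx * DIV1 q) :=
      hA1.sub (hIDIV1.const_mul Bx)
    rw [integral_sub hA2 (hICURL0.const_mul Bx)]
    rw [integral_sub hA1 (hIDIV1.const_mul Bx)]
    rw [integral_sub (hIDIV0.const_mul By) (hICURL1.const_mul By)]
    rw [integral_const_mul, integral_const_mul, integral_const_mul, integral_const_mul]
    rw [show ∫ q : ℝ × ℝ, DIV0 q = -ψ₀ 0 from div_lemma hψ₀c hψ₀s]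
    rw [show ∫ q : ℝ × ℝ, DIV1 q = -ψ₁ 0 from div_lemma hψ₁c hψ₁s]
    rw [show ∫ q : ℝ × ℝ, CURL0 q = 0 from curl_lemma hψ₀c hψ₀s]
    rw [show ∫ q : ℝ × ℝ, CURL1 q = 0 from curl_lemma hψ₁c hψ₁s]
    have hz0 : ψ₀ 0 = pd 0 φ 0 := by rw [hψ₀]; simp only [map_zero]
    have hz1 : ψ₁ 0 = pd 1 φ 0 := by rw [hψ₁]; simp only [map_zero]
    rw [hz0, hz1]
    ring
end
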